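/- Let H be a topological group acting continuously on a topological space X, let x ∈ X, write Stab(x) = {k ∈ H : k • x = x}, and let I = {(h, y) ∈ H × X : h • y = y} (the isotropy bundle, with the subspace topology of H × X). Then the following are equivalent: (ii) for every k ∈ Stab(x) and every neighborhood W of (k, x) in I, the set {y ∈ X : ∃ h, (h, y) ∈ W} is a neighborhood of x in X; (iii) for every k ∈ Stab(x) and every open set U ⊆ H × X containing (k, x), the set {(k' * h, y) : (h, y) ∈ U and k' • (h • y) = h • y} contains Stab(x) × {x} in its interior in H × X. -/

import Mathlib

open Topology

/-- Lemma 3, equivalence of (ii) and (iii), in the transformation-group case. Here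
`I = {(h, y) : h • y = y}` is the isotropy bundle of the transformation groupoid.
Condition (ii): for every `k ∈ Stab x`, every neighborhood `W` of `(k, x)` in `I`
(subspace topology) projects to a neighborhood of `x` in `X`.
Condition (iii): for every `k ∈ Stab x` and every open `U ⊆ H × X` containing `(k, x)`,
the set `G'U = {(k' * h, y) : (h, y) ∈ U, k' • (h • y) = h • y}` contains
`Stab x × {x}` in its interior. -/
theorem stmt_6 {H X : Type*} [TopologicalSpace H] [Group H] [IsTopologicalGroup H]
    [TopologicalSpace X] [MulAction H X] [ContinuousSMul H X] (x : X) :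
    (∀ k : H, k • x = x →
        ∀ W : Set (H × X), W ⊆ {p : H × X | p.1 • p.2 = p.2} →
          W ∈ 𝓝[{p : H × X | p.1 • p.2 = p.2}] (k, x) →
          {y : X | ∃ h : H, (h, y) ∈ W} ∈ 𝓝 x) ↔
    (∀ k : H, k • x = x →
        ∀ U : Set (H × X), IsOpen U → (k, x) ∈ U →
          ∀ k'' : H, k'' • x = x →
            (k'', x) ∈ interior {p : H × X | ∃ (k' h : H) (y : X),
              (h, y) ∈ U ∧ k' • (h • y) = h • y ∧ p = (k' * h, y)}) := by
  set I : Set (H × X) := {p : H × X | p.1 • p.2 = p.2} with hI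
  constructor
  · intro hii k hk U hU hkU k'' hk''
    -- find open A ∋ 1 and open B ∋ (k,x) with A * B ⊆ U (mult on first coord)
    have hφ : Continuous fun p : H × (H × X) => ((p.1 * p.2.1, p.2.2) : H × X) := by
      fun_prop
    have hopen : IsOpen ((fun p : H × (H × X) => ((p.1 * p.2.1, p.2.2) : H × X)) ⁻¹' U) :=
      hU.preimage hφ
    have hmem : ((1 : H), ((k, x) : H × X)) ∈
        (fun p : H × (H × X) => ((p.1 * p.2.1, p.2.2) : H × X)) ⁻¹' U := by
      simpa using hkU
    obtain ⟨A, B, hA, hB, h1A, hkB, hAB⟩ := isOpen_prod_iff.mp hopen 1 (k, x) hmem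
    -- the translated neighborhood in I
    set W₀ : Set (H × X) := {p : H × X | (k'' * p.1, p.2) ∈ B} ∩ I with hW₀
    have hW₀I : W₀ ⊆ I := Set.inter_subset_right
    have hW₀nhds : W₀ ∈ 𝓝[I] ((k''⁻¹ * k, x) : H × X) := by
      apply mem_nhdsWithin.mpr
      refine ⟨{p : H × X | (k'' * p.1, p.2) ∈ B}, ?_, ?_, fun p hp => ⟨hp.1, hp.2⟩⟩
      · exact hB.preimage (by fun_prop)
      · simp [mul_inv_cancel_left, hkB]
    have hstab : (k''⁻¹ * k) • x = x := by
      rw [mul_smul, hk, ← hk'', inv_smul_smul, hk'']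
    have hV : {y : X | ∃ h : H, (h, y) ∈ W₀} ∈ 𝓝 x := hii _ hstab W₀ hW₀I hW₀nhds
    rw [mem_interior_iff_mem_nhds, mem_nhds_prod_iff]
    refine ⟨{g : H | g * k''⁻¹ ∈ A}, ?_, {y : X | ∃ h : H, (h, y) ∈ W₀}, hV, ?_⟩
    · refine (hA.preimage (by fun_prop)).mem_nhds ?_
      show k'' * k''⁻¹ ∈ A
      simpa using h1A
    · rintro ⟨g, y⟩ ⟨hg, h, hhB, hhy⟩
      -- hhB : (k'' * h, y) ∈ B, hhy : h • y = y (from I)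
      have hIy : h • y = y := hhy
      have hU' : (g * k''⁻¹ * (k'' * h), y) ∈ U := hAB (Set.mk_mem_prod hg hhB)
      have heq : g * k''⁻¹ * (k'' * h) = g * h := by group
      rw [heq] at hU'
      refine ⟨g * h⁻¹ * g⁻¹, g * h, y, hU', ?_, by simp [mul_assoc]⟩
      have h1 : h⁻¹ • y = y := by
        conv_lhs => rw [← hIy]
        simp
      simp [mul_smul, hIy, h1]
  · intro hiii k hk W hWI hW
    obtain ⟨U, hU, hkU, hUIW⟩ := mem_nhdsWithin.mp hW
    have h1 := hiii k hk U hU hkU 1 (one_smul H x)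
    set S : Set (H × X) := {p : H × X | ∃ (k' h : H) (y : X),
        (h, y) ∈ U ∧ k' • (h • y) = h • y ∧ p = (k' * h, y)} with hS
    have hVopen : IsOpen {y : X | ((1 : H), y) ∈ interior S} :=
      (isOpen_interior).preimage (by fun_prop)
    refine Filter.mem_of_superset (hVopen.mem_nhds h1) ?_
    rintro y hy
    obtain ⟨k', h, y', hU', hfix, heq⟩ := interior_subset hy
    obtain ⟨heq1, heq2⟩ := Prod.mk.injEq .. ▸ heq
    subst heq2
    have hk' : k' = h⁻¹ := eq_inv_of_mul_eq_one_left heq1.symm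
    subst hk'
    have hhy : h • y = y := by
      simpa [inv_smul_smul] using hfix.symm
    exact ⟨h, hUIW ⟨hU', hhy⟩⟩
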